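/- Consider a single round of the sleeping-experts exponential-weights update with parameter η > 0: given a nonempty awake set 𝓔 ⊆ {1, …, M}, weights w_i > 0, expert predictions ŷ_i ∈ C for i ∈ 𝓔, an η-exp-concave loss ℓ : C → ℝ (i.e., y ↦ exp(−η ℓ(y)) is concave on the convex set C ⊆ ℝ), the aggregate prediction ŷ = (Σ_{i ∈ 𝓔} w_i ŷ_i)/(Σ_{i ∈ 𝓔} w_i), and updated weights w'_i = w_i · e^{−η ℓ(ŷ_i)} · (Σ_{j ∈ 𝓔} w_j)/(Σ_{j ∈ 𝓔} w_j e^{−η ℓ(ŷ_j)}) for i ∈ 𝓔. Then for every probability vector u = (u_1, …, u_M), letting U = Σ_{i ∈ 𝓔} u_i, one has Σ_{i ∈ 𝓔} u_i · ln(w'_i / w_i) ≥ −η Σ_{i ∈ 𝓔} u_i ℓ(ŷ_i) + η · U · ℓ(ŷ). -/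

import Mathlib

/-!
STATEMENT 1: One-round potential (relative entropy) inequality for the
sleeping-experts exponential-weights update with an η-exp-concave loss.
-/

open Finset

theorem sleeping_experts_one_round_potential
    (M : ℕ) (η : ℝ) (hη : 0 < η)
    (C : Set ℝ) (hC : Convex ℝ C)
    (𝓔 : Finset (Fin M)) (h𝓔 : 𝓔.Nonempty)
    (w : Fin M → ℝ) (hw : ∀ i, 0 < w i)
    (yhat : Fin M → ℝ) (hyhatC : ∀ i ∈ 𝓔, yhat i ∈ C)
    (loss : ℝ → ℝ)
    (hconc : ConcaveOn ℝ C (fun y => Real.exp (-η * loss y)))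
    -- aggregate prediction
    (ypred : ℝ) (hypred : ypred = (∑ i ∈ 𝓔, w i * yhat i) / (∑ i ∈ 𝓔, w i))
    -- updated weights on the awake set
    (w' : Fin M → ℝ)
    (hw' : ∀ i ∈ 𝓔,
      w' i = w i * Real.exp (-η * loss (yhat i)) * (∑ j ∈ 𝓔, w j) /
        (∑ j ∈ 𝓔, w j * Real.exp (-η * loss (yhat j))))
    -- probability vector u
    (u : Fin M → ℝ) (hu : ∀ i, 0 ≤ u i) (husum : ∑ i, u i = 1) :
    ∑ i ∈ 𝓔, u i * Real.log (w' i / w i)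
      ≥ -η * ∑ i ∈ 𝓔, u i * loss (yhat i) + η * (∑ i ∈ 𝓔, u i) * loss ypred := by
  set W : ℝ := ∑ j ∈ 𝓔, w j with hWdef
  set Z : ℝ := ∑ j ∈ 𝓔, w j * Real.exp (-η * loss (yhat j)) with hZdef
  have hW : 0 < W := Finset.sum_pos (fun i _ => hw i) h𝓔
  have hZ : 0 < Z := Finset.sum_pos (fun i _ => mul_pos (hw i) (Real.exp_pos _)) h𝓔
  -- Jensen
  have hjensen : (∑ j ∈ 𝓔, (w j / W) • Real.exp (-η * loss (yhat j)))
      ≤ Real.exp (-η * loss (∑ j ∈ 𝓔, (w j / W) • yhat j)) := by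
    refine hconc.le_map_sum (fun i _ => div_nonneg (hw i).le hW.le) ?_ hyhatC
    rw [← Finset.sum_div, div_self hW.ne']
  have hyp : ypred = ∑ j ∈ 𝓔, (w j / W) • yhat j := by
    rw [hypred]
    simp only [smul_eq_mul, div_mul_eq_mul_div, ← Finset.sum_div]
  have hZW : Z / W ≤ Real.exp (-η * loss ypred) := by
    rw [hyp]
    calc Z / W = ∑ j ∈ 𝓔, (w j / W) • Real.exp (-η * loss (yhat j)) := by
          simp only [smul_eq_mul, div_mul_eq_mul_div, ← Finset.sum_div]; rfl
      _ ≤ _ := hjensen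
  have hlog : η * loss ypred ≤ Real.log (W / Z) := by
    have h1 : Real.log (Z / W) ≤ -η * loss ypred := by
      calc Real.log (Z / W) ≤ Real.log (Real.exp (-η * loss ypred)) :=
            Real.log_le_log (div_pos hZ hW) hZW
        _ = -η * loss ypred := Real.log_exp _
    have : Real.log (W / Z) = -Real.log (Z / W) := by
      rw [← Real.log_inv, inv_div]
    linarith
  have hterm : ∀ i ∈ 𝓔, Real.log (w' i / w i)
      = -η * loss (yhat i) + Real.log (W / Z) := by
    intro i hi
    rw [hw' i hi]
    have : w i * Real.exp (-η * loss (yhat i)) * W / Z / w i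
        = Real.exp (-η * loss (yhat i)) * (W / Z) := by
      rw [div_div, mul_comm Z (w i), mul_assoc, mul_div_assoc, ← mul_div_assoc,
        ← mul_div_assoc, mul_div_mul_left _ _ (hw i).ne', mul_div_assoc]
    rw [this, Real.log_mul (Real.exp_pos _).ne' (div_pos hW hZ).ne', Real.log_exp]
  calc ∑ i ∈ 𝓔, u i * Real.log (w' i / w i)
      = ∑ i ∈ 𝓔, (u i * (-η * loss (yhat i)) + u i * Real.log (W / Z)) := by
        refine Finset.sum_congr rfl fun i hi => ?_
        rw [hterm i hi]; ring
    _ = -η * ∑ i ∈ 𝓔, u i * loss (yhat i) + (∑ i ∈ 𝓔, u i) * Real.log (W / Z) := by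
        rw [Finset.sum_add_distrib, Finset.mul_sum, ← Finset.sum_mul]
        congr 1
        refine Finset.sum_congr rfl fun i _ => by ring
    _ ≥ -η * ∑ i ∈ 𝓔, u i * loss (yhat i) + η * (∑ i ∈ 𝓔, u i) * loss ypred := by
        have hU : 0 ≤ ∑ i ∈ 𝓔, u i := Finset.sum_nonneg fun i _ => hu i
        nlinarith [mul_le_mul_of_nonneg_left hlog hU]
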